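/- Suppose the model error ε = y − h(x) satisfies ε ∼ N(0, σ_S²) when the point is from the training set (b = 0) and ε ∼ N(0, σ_D²) when drawn fresh from D (b = 1), with 0 < σ_S < σ_D. The adversary that outputs 0 iff |ε| < ε_eq, where ε_eq = σ_D · sqrt(2 ln(σ_D/σ_S)/((σ_D/σ_S)² − 1)), achieves membership advantage erf((σ_D/σ_S) · sqrt(ln(σ_D/σ_S)/((σ_D/σ_S)² − 1))) − erf(sqrt(ln(σ_D/σ_S)/((σ_D/σ_S)² − 1))). -/

import Mathlib

open ProbabilityTheory

/-- The Gauss error function `erf x = (1/√π) ∫_{-x}^{x} e^{-t²} dt`. -/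
noncomputable def erf (x : ℝ) : ℝ :=
  (Real.sqrt Real.pi)⁻¹ * ∫ t in (-x)..x, Real.exp (-t ^ 2)

open MeasureTheory in
lemma gauss_abs_lt (σ c : ℝ) (hσ : 0 < σ) (hc : 0 ≤ c) :
    ((gaussianReal 0 ⟨σ ^ 2, sq_nonneg σ⟩) {x : ℝ | |x| < c}).toReal
      = erf (c / (Real.sqrt 2 * σ)) := by
  have hv : (⟨σ ^ 2, sq_nonneg σ⟩ : NNReal) ≠ 0 := by
    simp [← NNReal.coe_injective.ne_iff, (pow_pos hσ 2).ne']
  have hset : {x : ℝ | |x| < c} = Set.Ioo (-c) c := by ext x; simp [abs_lt]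
  rw [hset, ProbabilityTheory.gaussianReal_apply_eq_integral _ hv,
    ENNReal.toReal_ofReal (MeasureTheory.setIntegral_nonneg measurableSet_Ioo
      fun x _ => ProbabilityTheory.gaussianPDFReal_nonneg 0 ⟨σ ^ 2, sq_nonneg σ⟩ x)]
  have h2σ : Real.sqrt 2 * σ ≠ 0 := by positivity
  have hpdf : ∀ x : ℝ, ProbabilityTheory.gaussianPDFReal 0 ⟨σ ^ 2, sq_nonneg σ⟩ x
      = (Real.sqrt 2 * σ)⁻¹ * ((Real.sqrt Real.pi)⁻¹ * Real.exp (-(x / (Real.sqrt 2 * σ)) ^ 2)) := by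
    intro x
    show (Real.sqrt (2 * Real.pi * ((⟨σ ^ 2, sq_nonneg σ⟩ : NNReal) : ℝ)))⁻¹ * Real.exp (-(x - 0) ^ 2 / (2 * ((⟨σ ^ 2, sq_nonneg σ⟩ : NNReal) : ℝ))) = _
    simp only [NNReal.coe_mk]
    have h2 : Real.sqrt (2 * Real.pi * σ ^ 2)
        = Real.sqrt 2 * σ * Real.sqrt Real.pi := by
      rw [Real.sqrt_mul (by positivity), Real.sqrt_mul (by norm_num),
        Real.sqrt_sq hσ.le]
      ring
    rw [h2]
    have h3 : -(x - 0) ^ 2 / (2 * σ ^ 2) = -(x / (Real.sqrt 2 * σ)) ^ 2 := by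
      rw [div_pow, mul_pow, Real.sq_sqrt (by norm_num : (0:ℝ) ≤ 2)]
      ring
    rw [h3, mul_inv]
    ring
  simp_rw [hpdf]
  rw [← integral_Ioc_eq_integral_Ioo,
    ← intervalIntegral.integral_of_le (by linarith : -c ≤ c)]
  have := intervalIntegral.integral_comp_div
    (a := -c) (b := c) (c := Real.sqrt 2 * σ)
    (f := fun t => (Real.sqrt Real.pi)⁻¹ * Real.exp (-t ^ 2)) h2σ
  rw [intervalIntegral.integral_const_mul, this, smul_eq_mul, ← mul_assoc,
    inv_mul_cancel₀ h2σ, one_mul, intervalIntegral.integral_const_mul, erf, neg_div]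

/-- With Gaussian errors `N(0, σ_S²)` on training points (`b = 0`) and
`N(0, σ_D²)` on fresh points (`b = 1`), `0 < σ_S < σ_D`, the adversary outputting 0 iff
`|ε| < ε_eq` with `ε_eq = σ_D √(2 ln(σ_D/σ_S) / ((σ_D/σ_S)² − 1))` achieves membership
advantage `erf((σ_D/σ_S)·√(ln(σ_D/σ_S)/((σ_D/σ_S)²−1))) − erf(√(ln(σ_D/σ_S)/((σ_D/σ_S)²−1)))`. -/
theorem gaussian_threshold_membership_advantage
    (σS σD : ℝ) (hσS : 0 < σS) (hσ : σS < σD) :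
    let εeq : ℝ := σD * Real.sqrt (2 * Real.log (σD / σS) / ((σD / σS) ^ 2 - 1))
    ((gaussianReal 0 ⟨σS ^ 2, sq_nonneg σS⟩) {x : ℝ | |x| < εeq}).toReal
      - ((gaussianReal 0 ⟨σD ^ 2, sq_nonneg σD⟩) {x : ℝ | |x| < εeq}).toReal
    = erf ((σD / σS) * Real.sqrt (Real.log (σD / σS) / ((σD / σS) ^ 2 - 1)))
      - erf (Real.sqrt (Real.log (σD / σS) / ((σD / σS) ^ 2 - 1))) := by
  intro εeq
  have hσD : 0 < σD := hσS.trans hσ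
  have hεeq : 0 ≤ εeq := by positivity
  have h2 : Real.sqrt 2 ≠ 0 := by positivity
  rw [gauss_abs_lt σS εeq hσS hεeq, gauss_abs_lt σD εeq hσD hεeq]
  have hsplit : Real.sqrt (2 * Real.log (σD / σS) / ((σD / σS) ^ 2 - 1))
      = Real.sqrt 2 * Real.sqrt (Real.log (σD / σS) / ((σD / σS) ^ 2 - 1)) := by
    rw [mul_div_assoc, Real.sqrt_mul (by norm_num)]
  have hS : εeq / (Real.sqrt 2 * σS)
      = (σD / σS) * Real.sqrt (Real.log (σD / σS) / ((σD / σS) ^ 2 - 1)) := by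
    show σD * _ / _ = _
    rw [hsplit]
    field_simp
  have hD : εeq / (Real.sqrt 2 * σD)
      = Real.sqrt (Real.log (σD / σS) / ((σD / σS) ^ 2 - 1)) := by
    show σD * _ / _ = _
    rw [hsplit]
    field_simp
  rw [hS, hD]
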